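/- Let d ≥ 1 be an integer and let N > 0. Then there exist constants 0 < c ≤ C, depending only on d and N, such that for all real numbers 0 < s < t and all x, y ∈ ℝ^d: c · t^{−d} ( t/(t + |x−y|) )^{d+N} ≤ ∫_{ℝ^d} (t−s)^{−d} ( (t−s)/((t−s) + |x−z|) )^{d+N} · s^{−d} ( s/(s + |z−y|) )^{d+N} dz ≤ C · t^{−d} ( t/(t + |x−y|) )^{d+N}. -/

import Mathlib

open MeasureTheory Metric

namespace CompKerAux
/-- Algebraic rewriting of the kernel profile. -/
lemma ker_rw (dr N u r : ℝ) (hu : 0 < u) (hr : 0 ≤ r) :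
    u ^ (-dr) * (u / (u + r)) ^ (dr + N) = u ^ N * (u + r) ^ (-(dr + N)) := by
  have h1 : 0 < u + r := by linarith
  rw [Real.div_rpow hu.le h1.le, Real.rpow_neg h1.le, div_eq_mul_inv, ← mul_assoc,
    ← Real.rpow_add hu, show -dr + (dr + N) = N by ring]

/-- Scaling/translation invariance of the kernel integral. -/
lemma lintegral_ker {d : ℕ} (N : ℝ) {u : ℝ} (hu : 0 < u) (w : EuclideanSpace ℝ (Fin d)) :
    ∫⁻ z : EuclideanSpace ℝ (Fin d),
        ENNReal.ofReal (u ^ N * (u + ‖w - z‖) ^ (-((d : ℝ) + N))) =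
      ∫⁻ z : EuclideanSpace ℝ (Fin d), ENNReal.ofReal ((1 + ‖z‖) ^ (-((d : ℝ) + N))) := by
  set p : ℝ := (d : ℝ) + N with hp
  have hsm : ∀ z : EuclideanSpace ℝ (Fin d), u + ‖z‖ = u * (1 + ‖u⁻¹ • z‖) := by
    intro z
    rw [norm_smul]
    simp only [norm_inv, Real.norm_eq_abs, abs_of_pos hu]
    field_simp
  have hmeas : Measurable fun z : EuclideanSpace ℝ (Fin d) =>
      ENNReal.ofReal ((1 + ‖z‖) ^ (-p)) := by fun_prop
  calc ∫⁻ z : EuclideanSpace ℝ (Fin d), ENNReal.ofReal (u ^ N * (u + ‖w - z‖) ^ (-p))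
      = ∫⁻ z : EuclideanSpace ℝ (Fin d), ENNReal.ofReal (u ^ N * (u + ‖z - w‖) ^ (-p)) :=
        lintegral_congr fun z => by rw [norm_sub_rev]
    _ = ∫⁻ z : EuclideanSpace ℝ (Fin d), ENNReal.ofReal (u ^ N * (u + ‖z‖) ^ (-p)) :=
        lintegral_sub_right_eq_self
          (fun z : EuclideanSpace ℝ (Fin d) => ENNReal.ofReal (u ^ N * (u + ‖z‖) ^ (-p))) w
    _ = ∫⁻ z : EuclideanSpace ℝ (Fin d),
          ENNReal.ofReal (u ^ (-(d:ℝ))) * ENNReal.ofReal ((1 + ‖u⁻¹ • z‖) ^ (-p)) := by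
        refine lintegral_congr fun z => ?_
        rw [hsm z, Real.mul_rpow hu.le (by positivity), ← mul_assoc, ← Real.rpow_add hu,
          show N + -p = -(d:ℝ) by rw [hp]; ring, ENNReal.ofReal_mul (by positivity)]
    _ = ENNReal.ofReal (u ^ (-(d:ℝ))) *
          ∫⁻ z : EuclideanSpace ℝ (Fin d), ENNReal.ofReal ((1 + ‖u⁻¹ • z‖) ^ (-p)) :=
        lintegral_const_mul' _ _ ENNReal.ofReal_ne_top
    _ = ENNReal.ofReal (u ^ (-(d:ℝ))) * (ENNReal.ofReal (u ^ (d:ℕ)) *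
          ∫⁻ z : EuclideanSpace ℝ (Fin d), ENNReal.ofReal ((1 + ‖z‖) ^ (-p))) := by
        congr 1
        have h1 : ∫⁻ z : EuclideanSpace ℝ (Fin d), ENNReal.ofReal ((1 + ‖u⁻¹ • z‖) ^ (-p)) =
            ∫⁻ z, ENNReal.ofReal ((1 + ‖z‖) ^ (-p))
              ∂(Measure.map (fun z : EuclideanSpace ℝ (Fin d) => u⁻¹ • z) volume) :=
          (lintegral_map hmeas (measurable_const_smul u⁻¹)).symm
        rw [h1, Measure.map_addHaar_smul volume (inv_ne_zero hu.ne'), lintegral_smul_measure]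
        congr 1
        rw [finrank_euclideanSpace_fin]
        rw [inv_pow, inv_inv, abs_pow, abs_of_pos hu]
    _ = ∫⁻ z : EuclideanSpace ℝ (Fin d), ENNReal.ofReal ((1 + ‖z‖) ^ (-p)) := by
        rw [← mul_assoc, ← ENNReal.ofReal_mul (by positivity), ← Real.rpow_natCast u d,
          ← Real.rpow_add hu]
        simp


lemma lower_aux {d : ℕ} (hd : 1 ≤ d) (N : ℝ) (hN : 0 < N) {a b : ℝ} (ha : 0 < a)
    (hab : a ≤ b) (x y : EuclideanSpace ℝ (Fin d)) :
    ENNReal.ofReal ((2:ℝ) ^ (-((d:ℝ) + 2 * N)) *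
        (volume (ball (0 : EuclideanSpace ℝ (Fin d)) 1)).toReal *
        ((a + b) ^ N * ((a + b) + ‖x - y‖) ^ (-((d : ℝ) + N)))) ≤
      ∫⁻ z : EuclideanSpace ℝ (Fin d),
        ENNReal.ofReal (b ^ N * (b + ‖x - z‖) ^ (-((d : ℝ) + N)) *
          (a ^ N * (a + ‖z - y‖) ^ (-((d : ℝ) + N)))) := by
  haveI : NeZero d := ⟨by omega⟩
  set p : ℝ := (d : ℝ) + N with hp
  have hp0 : 0 < p := by positivity
  have hb : 0 < b := ha.trans_le hab
  set T : ℝ := (a + b) + ‖x - y‖ with hT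
  have hT0 : 0 < T := by have := norm_nonneg (x - y); rw [hT]; linarith
  set ω : ENNReal := volume (ball (0 : EuclideanSpace ℝ (Fin d)) 1) with hω
  -- pointwise lower bound on the ball
  have hpt : ∀ z ∈ ball y a,
      ENNReal.ofReal ((2:ℝ) ^ (-(N + p)) * (a + b) ^ N * T ^ (-p) * a ^ (-(d:ℝ))) ≤
        ENNReal.ofReal (b ^ N * (b + ‖x - z‖) ^ (-p) * (a ^ N * (a + ‖z - y‖) ^ (-p))) := by
    intro z hz
    have hzy : ‖z - y‖ ≤ a := by
      have : dist z y < a := mem_ball.mp hz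
      rw [dist_eq_norm] at this; linarith
    refine ENNReal.ofReal_le_ofReal ?_
    have hxz : ‖x - z‖ ≤ ‖x - y‖ + a := by
      have h1 : ‖x - z‖ ≤ ‖x - y‖ + ‖y - z‖ := by
        have := dist_triangle x y z
        simpa [dist_eq_norm] using this
      have h2 : ‖y - z‖ = ‖z - y‖ := norm_sub_rev _ _
      linarith
    have e1 : T ^ (-p) ≤ (b + ‖x - z‖) ^ (-p) := by
      refine Real.rpow_le_rpow_of_nonpos (by have := norm_nonneg (x - z); linarith) ?_
        (neg_nonpos.mpr hp0.le)
      rw [hT]; linarith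
    have e2 : (2:ℝ) ^ (-N) * (a + b) ^ N ≤ b ^ N := by
      have hhalf : (a + b) / 2 ≤ b := by linarith
      calc (2:ℝ) ^ (-N) * (a + b) ^ N = ((a + b) / 2) ^ N := by
            rw [Real.div_rpow (by positivity) (by norm_num),
              Real.rpow_neg (by norm_num : (0:ℝ) ≤ 2)]
            ring
        _ ≤ b ^ N := Real.rpow_le_rpow (by positivity) hhalf hN.le
    have e3 : (2:ℝ) ^ (-p) * a ^ (-(d:ℝ)) ≤ a ^ N * (a + ‖z - y‖) ^ (-p) := by
      have h2a : (2 * a) ^ (-p) ≤ (a + ‖z - y‖) ^ (-p) := by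
        refine Real.rpow_le_rpow_of_nonpos (by have := norm_nonneg (z - y); positivity) ?_
          (neg_nonpos.mpr hp0.le)
        linarith
      have heq : (2:ℝ) ^ (-p) * a ^ (-(d:ℝ)) = a ^ N * (2 * a) ^ (-p) := by
        rw [Real.mul_rpow (by norm_num : (0:ℝ) ≤ 2) ha.le,
          show a ^ N * ((2:ℝ) ^ (-p) * a ^ (-p)) = (2:ℝ) ^ (-p) * (a ^ N * a ^ (-p)) from by ring,
          ← Real.rpow_add ha, show N + -p = -(d:ℝ) from by rw [hp]; ring]
      rw [heq]
      exact mul_le_mul_of_nonneg_left h2a (by positivity)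
    calc (2:ℝ) ^ (-(N + p)) * (a + b) ^ N * T ^ (-p) * a ^ (-(d:ℝ))
        = ((2:ℝ) ^ (-N) * (a + b) ^ N * T ^ (-p)) * ((2:ℝ) ^ (-p) * a ^ (-(d:ℝ))) := by
          rw [show -(N + p) = -N + -p from by ring, Real.rpow_add (by norm_num : (0:ℝ) < 2)]
          ring
      _ ≤ (b ^ N * (b + ‖x - z‖) ^ (-p)) * (a ^ N * (a + ‖z - y‖) ^ (-p)) :=
          mul_le_mul (mul_le_mul e2 e1 (by positivity) (by positivity)) e3
            (by positivity) (by positivity)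
  -- volume of the ball
  have hball : volume (ball y a) = ENNReal.ofReal (a ^ (d:ℝ)) * ω := by
    rw [Measure.addHaar_ball volume y ha.le, ← Real.rpow_natCast a, finrank_euclideanSpace_fin]
  calc ENNReal.ofReal ((2:ℝ) ^ (-((d:ℝ) + 2 * N)) * ω.toReal * ((a + b) ^ N * T ^ (-p)))
      ≤ ENNReal.ofReal ((2:ℝ) ^ (-(N + p)) * (a + b) ^ N * T ^ (-p)) * ω := by
        rw [show (2:ℝ) ^ (-((d:ℝ) + 2 * N)) * ω.toReal * ((a + b) ^ N * T ^ (-p)) =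
            ((2:ℝ) ^ (-((d:ℝ) + 2 * N)) * (a + b) ^ N * T ^ (-p)) * ω.toReal from by ring,
          ENNReal.ofReal_mul (by positivity), show -((d:ℝ) + 2 * N) = -(N + p) from by rw [hp]; ring]
        exact mul_le_mul_of_nonneg_left ENNReal.ofReal_toReal_le zero_le
    _ = ENNReal.ofReal ((2:ℝ) ^ (-(N + p)) * (a + b) ^ N * T ^ (-p) * a ^ (-(d:ℝ))) *
          (ENNReal.ofReal (a ^ (d:ℝ)) * ω) := by
        rw [← mul_assoc, ← ENNReal.ofReal_mul (by positivity)]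
        congr 2
        have haa : a ^ (-(d:ℝ)) * a ^ ((d:ℝ)) = 1 := by
          rw [← Real.rpow_add ha]; norm_num
        rw [show (2:ℝ) ^ (-(N + p)) * (a + b) ^ N * T ^ (-p) * a ^ (-(d:ℝ)) * a ^ ((d:ℝ)) =
          2 ^ (-(N + p)) * (a + b) ^ N * T ^ (-p) * (a ^ (-(d:ℝ)) * a ^ ((d:ℝ))) from by ring,
          haa, mul_one]
    _ = ENNReal.ofReal ((2:ℝ) ^ (-(N + p)) * (a + b) ^ N * T ^ (-p) * a ^ (-(d:ℝ))) *
          volume (ball y a) := by rw [hball]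
    _ = ∫⁻ _ in ball y a,
          ENNReal.ofReal ((2:ℝ) ^ (-(N + p)) * (a + b) ^ N * T ^ (-p) * a ^ (-(d:ℝ))) := by
        rw [setLIntegral_const]
    _ ≤ ∫⁻ z in ball y a,
          ENNReal.ofReal (b ^ N * (b + ‖x - z‖) ^ (-p) * (a ^ N * (a + ‖z - y‖) ^ (-p))) :=
        setLIntegral_mono' measurableSet_ball hpt
    _ ≤ ∫⁻ z : EuclideanSpace ℝ (Fin d),
          ENNReal.ofReal (b ^ N * (b + ‖x - z‖) ^ (-p) * (a ^ N * (a + ‖z - y‖) ^ (-p))) :=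
        setLIntegral_le_lintegral _ _

lemma upper_aux {d : ℕ} (N : ℝ) (hN : 0 < N) {s t : ℝ} (hs : 0 < s) (hst : s < t)
    (x y : EuclideanSpace ℝ (Fin d)) :
    ∫⁻ z : EuclideanSpace ℝ (Fin d),
        ENNReal.ofReal ((t - s) ^ N * ((t - s) + ‖x - z‖) ^ (-((d : ℝ) + N)) *
          (s ^ N * (s + ‖z - y‖) ^ (-((d : ℝ) + N)))) ≤
      ENNReal.ofReal ((2:ℝ) ^ ((d:ℝ) + N) * (t ^ N * (t + ‖x - y‖) ^ (-((d : ℝ) + N)))) *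
        (2 * ∫⁻ z : EuclideanSpace ℝ (Fin d), ENNReal.ofReal ((1 + ‖z‖) ^ (-((d : ℝ) + N)))) := by
  set p : ℝ := (d : ℝ) + N with hp
  have hp0 : 0 < p := by positivity
  have hu : 0 < t - s := by linarith
  have ht : 0 < t := hs.trans hst
  have hR : (0:ℝ) ≤ ‖x - y‖ := norm_nonneg _
  set R := ‖x - y‖ with hRdef
  have hT : 0 < t + R := by linarith
  -- pointwise bound
  have key : ∀ z : EuclideanSpace ℝ (Fin d),
      (t - s) ^ N * ((t - s) + ‖x - z‖) ^ (-p) * (s ^ N * (s + ‖z - y‖) ^ (-p)) ≤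
        (2:ℝ) ^ p * (t ^ N * (t + R) ^ (-p)) *
          ((t - s) ^ N * ((t - s) + ‖x - z‖) ^ (-p) + s ^ N * (s + ‖z - y‖) ^ (-p)) := by
    intro z
    have hA : 0 < (t - s) + ‖x - z‖ := by have := norm_nonneg (x - z); linarith
    have hB : 0 < s + ‖z - y‖ := by have := norm_nonneg (z - y); linarith
    have htri : ‖x - y‖ ≤ ‖x - z‖ + ‖z - y‖ := by
      have := dist_triangle x z y
      simpa [dist_eq_norm] using this
    have e2 : ((t + R) / 2) ^ (-p) = (2:ℝ) ^ p * (t + R) ^ (-p) := by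
      rw [div_eq_mul_inv, Real.mul_rpow hT.le (by norm_num),
        Real.inv_rpow (by norm_num : (0:ℝ) ≤ 2), Real.rpow_neg (by norm_num : (0:ℝ) ≤ 2),
        inv_inv]
      ring
    rcases le_or_gt ((t + R) / 2) ((t - s) + ‖x - z‖) with h | h
    · have e1 : ((t - s) + ‖x - z‖) ^ (-p) ≤ ((t + R) / 2) ^ (-p) :=
        Real.rpow_le_rpow_of_nonpos (by positivity) h (neg_nonpos.mpr hp0.le)
      have e3 : (t - s) ^ N ≤ t ^ N := Real.rpow_le_rpow hu.le (by linarith) hN.le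
      have h1 : (t - s) ^ N * ((t - s) + ‖x - z‖) ^ (-p) ≤
          (2:ℝ) ^ p * (t ^ N * (t + R) ^ (-p)) := by
        calc (t - s) ^ N * ((t - s) + ‖x - z‖) ^ (-p)
            ≤ t ^ N * ((t + R) / 2) ^ (-p) :=
              mul_le_mul e3 e1 (by positivity) (by positivity)
          _ = (2:ℝ) ^ p * (t ^ N * (t + R) ^ (-p)) := by rw [e2]; ring
      calc (t - s) ^ N * ((t - s) + ‖x - z‖) ^ (-p) * (s ^ N * (s + ‖z - y‖) ^ (-p))
          ≤ (2:ℝ) ^ p * (t ^ N * (t + R) ^ (-p)) * (s ^ N * (s + ‖z - y‖) ^ (-p)) :=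
            mul_le_mul_of_nonneg_right h1 (by positivity)
        _ ≤ _ := mul_le_mul_of_nonneg_left (le_add_of_nonneg_left (by positivity)) (by positivity)
    · have hB2 : (t + R) / 2 ≤ s + ‖z - y‖ := by linarith
      have e1 : (s + ‖z - y‖) ^ (-p) ≤ ((t + R) / 2) ^ (-p) :=
        Real.rpow_le_rpow_of_nonpos (by positivity) hB2 (neg_nonpos.mpr hp0.le)
      have e3 : s ^ N ≤ t ^ N := Real.rpow_le_rpow hs.le (by linarith) hN.le
      have h1 : s ^ N * (s + ‖z - y‖) ^ (-p) ≤ (2:ℝ) ^ p * (t ^ N * (t + R) ^ (-p)) := by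
        calc s ^ N * (s + ‖z - y‖) ^ (-p)
            ≤ t ^ N * ((t + R) / 2) ^ (-p) :=
              mul_le_mul e3 e1 (by positivity) (by positivity)
          _ = (2:ℝ) ^ p * (t ^ N * (t + R) ^ (-p)) := by rw [e2]; ring
      calc (t - s) ^ N * ((t - s) + ‖x - z‖) ^ (-p) * (s ^ N * (s + ‖z - y‖) ^ (-p))
          ≤ (t - s) ^ N * ((t - s) + ‖x - z‖) ^ (-p) * ((2:ℝ) ^ p * (t ^ N * (t + R) ^ (-p))) :=
            mul_le_mul_of_nonneg_left h1 (by positivity)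
        _ = (2:ℝ) ^ p * (t ^ N * (t + R) ^ (-p)) *
              ((t - s) ^ N * ((t - s) + ‖x - z‖) ^ (-p)) := by ring
        _ ≤ _ := mul_le_mul_of_nonneg_left (le_add_of_nonneg_right (by positivity)) (by positivity)
  have hmeas1 : Measurable fun z : EuclideanSpace ℝ (Fin d) =>
      ENNReal.ofReal ((t - s) ^ N * ((t - s) + ‖x - z‖) ^ (-p)) := by fun_prop
  calc ∫⁻ z : EuclideanSpace ℝ (Fin d),
        ENNReal.ofReal ((t - s) ^ N * ((t - s) + ‖x - z‖) ^ (-p) *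
          (s ^ N * (s + ‖z - y‖) ^ (-p)))
      ≤ ∫⁻ z : EuclideanSpace ℝ (Fin d),
          ENNReal.ofReal ((2:ℝ) ^ p * (t ^ N * (t + R) ^ (-p)) *
            ((t - s) ^ N * ((t - s) + ‖x - z‖) ^ (-p) + s ^ N * (s + ‖z - y‖) ^ (-p))) :=
        lintegral_mono fun z => ENNReal.ofReal_le_ofReal (key z)
    _ = ENNReal.ofReal ((2:ℝ) ^ p * (t ^ N * (t + R) ^ (-p))) *
          ∫⁻ z : EuclideanSpace ℝ (Fin d),
            (ENNReal.ofReal ((t - s) ^ N * ((t - s) + ‖x - z‖) ^ (-p)) +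
              ENNReal.ofReal (s ^ N * (s + ‖z - y‖) ^ (-p))) := by
        rw [← lintegral_const_mul' _ _ ENNReal.ofReal_ne_top]
        refine lintegral_congr fun z => ?_
        rw [ENNReal.ofReal_mul (by positivity), ENNReal.ofReal_add (by positivity) (by positivity)]
    _ = ENNReal.ofReal ((2:ℝ) ^ p * (t ^ N * (t + R) ^ (-p))) *
          ((∫⁻ z : EuclideanSpace ℝ (Fin d),
              ENNReal.ofReal ((t - s) ^ N * ((t - s) + ‖x - z‖) ^ (-p))) +
            ∫⁻ z : EuclideanSpace ℝ (Fin d),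
              ENNReal.ofReal (s ^ N * (s + ‖z - y‖) ^ (-p))) := by
        rw [lintegral_add_left hmeas1]
    _ = ENNReal.ofReal ((2:ℝ) ^ p * (t ^ N * (t + R) ^ (-p))) *
          (2 * ∫⁻ z : EuclideanSpace ℝ (Fin d), ENNReal.ofReal ((1 + ‖z‖) ^ (-p))) := by
        congr 1
        have e1 := lintegral_ker (d := d) N hu x
        have e2' : (∫⁻ z : EuclideanSpace ℝ (Fin d),
            ENNReal.ofReal (s ^ N * (s + ‖z - y‖) ^ (-p))) =
            ∫⁻ z : EuclideanSpace ℝ (Fin d),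
            ENNReal.ofReal (s ^ N * (s + ‖y - z‖) ^ (-p)) :=
          lintegral_congr fun z => by rw [norm_sub_rev]
        have e2 := lintegral_ker (d := d) N hs y
        rw [e1, e2', e2, two_mul]

end CompKerAux

open CompKerAux in
/-- Lemma 4.1 of the paper: two-sided bound for the composition of two heat-kernel-type
profiles: `∫ (t−s)^{−d} ((t−s)/((t−s)+|x−z|))^{d+N} s^{−d} (s/(s+|z−y|))^{d+N} dz ≍
t^{−d} (t/(t+|x−y|))^{d+N}` for `0 < s < t`. -/
theorem composition_of_two_kernels
    (d : ℕ) (hd : 1 ≤ d) (N : ℝ) (hN : 0 < N) :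
    ∃ c C : ℝ, 0 < c ∧ c ≤ C ∧
      ∀ s t : ℝ, 0 < s → s < t → ∀ x y : EuclideanSpace ℝ (Fin d),
        ENNReal.ofReal (c * (t ^ (-(d : ℝ)) * (t / (t + ‖x - y‖)) ^ ((d : ℝ) + N))) ≤
          (∫⁻ z, ENNReal.ofReal
            ((t - s) ^ (-(d : ℝ)) * ((t - s) / ((t - s) + ‖x - z‖)) ^ ((d : ℝ) + N) *
              (s ^ (-(d : ℝ)) * (s / (s + ‖z - y‖)) ^ ((d : ℝ) + N)))) ∧
        (∫⁻ z, ENNReal.ofReal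
            ((t - s) ^ (-(d : ℝ)) * ((t - s) / ((t - s) + ‖x - z‖)) ^ ((d : ℝ) + N) *
              (s ^ (-(d : ℝ)) * (s / (s + ‖z - y‖)) ^ ((d : ℝ) + N)))) ≤
          ENNReal.ofReal (C * (t ^ (-(d : ℝ)) * (t / (t + ‖x - y‖)) ^ ((d : ℝ) + N))) := by
  haveI : NeZero d := ⟨by omega⟩
  have hI : (∫⁻ z : EuclideanSpace ℝ (Fin d),
      ENNReal.ofReal ((1 + ‖z‖) ^ (-((d:ℝ) + N)))) < ⊤ := by
    have hnr : (Module.finrank ℝ (EuclideanSpace ℝ (Fin d)) : ℝ) < (d:ℝ) + N := by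
      rw [finrank_euclideanSpace_fin]; linarith
    exact finite_integral_one_add_norm hnr
  set I₀ : ℝ := (∫⁻ z : EuclideanSpace ℝ (Fin d),
      ENNReal.ofReal ((1 + ‖z‖) ^ (-((d:ℝ) + N)))).toReal with hI0
  set ω : ENNReal := volume (ball (0 : EuclideanSpace ℝ (Fin d)) 1) with hω
  have hω0 : 0 < ω.toReal :=
    ENNReal.toReal_pos (measure_ball_pos volume _ one_pos).ne' measure_ball_lt_top.ne
  set c : ℝ := 2 ^ (-((d:ℝ) + 2 * N)) * ω.toReal with hc
  set C0 : ℝ := 2 ^ ((d:ℝ) + N) * (2 * I₀) with hC0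
  have hc0 : 0 < c := mul_pos (by positivity) hω0
  refine ⟨c, max C0 c, hc0, le_max_right _ _, ?_⟩
  intro s t hs hst x y
  have hu : 0 < t - s := by linarith
  have ht : 0 < t := hs.trans hst
  have hker : ∀ z : EuclideanSpace ℝ (Fin d),
      ENNReal.ofReal ((t - s) ^ (-(d:ℝ)) * ((t - s) / ((t - s) + ‖x - z‖)) ^ ((d:ℝ) + N) *
        (s ^ (-(d:ℝ)) * (s / (s + ‖z - y‖)) ^ ((d:ℝ) + N))) =
      ENNReal.ofReal ((t - s) ^ N * ((t - s) + ‖x - z‖) ^ (-((d:ℝ) + N)) *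
        (s ^ N * (s + ‖z - y‖) ^ (-((d:ℝ) + N)))) := fun z => by
    rw [ker_rw (d:ℝ) N (t - s) _ hu (norm_nonneg _), ker_rw (d:ℝ) N s _ hs (norm_nonneg _)]
  have hint : (∫⁻ z : EuclideanSpace ℝ (Fin d), ENNReal.ofReal
      ((t - s) ^ (-(d:ℝ)) * ((t - s) / ((t - s) + ‖x - z‖)) ^ ((d:ℝ) + N) *
        (s ^ (-(d:ℝ)) * (s / (s + ‖z - y‖)) ^ ((d:ℝ) + N)))) =
      ∫⁻ z : EuclideanSpace ℝ (Fin d), ENNReal.ofReal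
      ((t - s) ^ N * ((t - s) + ‖x - z‖) ^ (-((d:ℝ) + N)) *
        (s ^ N * (s + ‖z - y‖) ^ (-((d:ℝ) + N)))) := lintegral_congr hker
  have hkt : t ^ (-(d:ℝ)) * (t / (t + ‖x - y‖)) ^ ((d:ℝ) + N) =
      t ^ N * (t + ‖x - y‖) ^ (-((d:ℝ) + N)) := ker_rw _ _ _ _ ht (norm_nonneg _)
  constructor
  · -- lower bound
    rw [hint, hkt]
    rcases le_total s (t - s) with hcase | hcase
    · have hlow := lower_aux hd N hN hs hcase x y
      rw [show s + (t - s) = t from by ring] at hlow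
      calc ENNReal.ofReal (c * (t ^ N * (t + ‖x - y‖) ^ (-((d:ℝ) + N))))
          = ENNReal.ofReal ((2:ℝ) ^ (-((d:ℝ) + 2 * N)) * ω.toReal *
              (t ^ N * (t + ‖x - y‖) ^ (-((d:ℝ) + N)))) := by rw [hc]
        _ ≤ _ := hlow
    · have hlow := lower_aux hd N hN hu hcase y x
      rw [show (t - s) + s = t from by ring, norm_sub_rev y x] at hlow
      have heq : (∫⁻ z : EuclideanSpace ℝ (Fin d), ENNReal.ofReal
          (s ^ N * (s + ‖y - z‖) ^ (-((d:ℝ) + N)) *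
            ((t - s) ^ N * ((t - s) + ‖z - x‖) ^ (-((d:ℝ) + N))))) =
          ∫⁻ z : EuclideanSpace ℝ (Fin d), ENNReal.ofReal
          ((t - s) ^ N * ((t - s) + ‖x - z‖) ^ (-((d:ℝ) + N)) *
            (s ^ N * (s + ‖z - y‖) ^ (-((d:ℝ) + N)))) := by
        refine lintegral_congr fun z => ?_
        rw [norm_sub_rev y z, norm_sub_rev z x]
        exact congrArg ENNReal.ofReal (by ring)
      calc ENNReal.ofReal (c * (t ^ N * (t + ‖x - y‖) ^ (-((d:ℝ) + N))))
          = ENNReal.ofReal ((2:ℝ) ^ (-((d:ℝ) + 2 * N)) * ω.toReal *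
              (t ^ N * (t + ‖x - y‖) ^ (-((d:ℝ) + N)))) := by rw [hc]
        _ ≤ _ := hlow
        _ = _ := heq
  · -- upper bound
    rw [hint, hkt]
    refine le_trans (upper_aux N hN hs hst x y) ?_
    have hIeq : (2 : ENNReal) * (∫⁻ z : EuclideanSpace ℝ (Fin d),
        ENNReal.ofReal ((1 + ‖z‖) ^ (-((d:ℝ) + N)))) = ENNReal.ofReal (2 * I₀) := by
      rw [ENNReal.ofReal_mul (by norm_num : (0:ℝ) ≤ 2), hI0,
        ENNReal.ofReal_toReal hI.ne]
      norm_num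
    rw [hIeq, ← ENNReal.ofReal_mul (by positivity)]
    refine ENNReal.ofReal_le_ofReal ?_
    have hX : (0:ℝ) ≤ t ^ N * (t + ‖x - y‖) ^ (-((d:ℝ) + N)) := by positivity
    calc (2:ℝ) ^ ((d:ℝ) + N) * (t ^ N * (t + ‖x - y‖) ^ (-((d:ℝ) + N))) * (2 * I₀)
        = C0 * (t ^ N * (t + ‖x - y‖) ^ (-((d:ℝ) + N))) := by rw [hC0]; ring
      _ ≤ max C0 c * (t ^ N * (t + ‖x - y‖) ^ (-((d:ℝ) + N))) :=
          mul_le_mul_of_nonneg_right (le_max_left _ _) hX
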